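/- arXiv:1309.2704 — 5 statements merged into one kernel-verified Lean document; each statement's English description precedes it below -/
import Mathlib

section
/- For X_0 > 0 and -1 < X < 0, let R_1'(α) = -1 + X_0/(α² - X_0²) - X_0²·(X+1)/(α·(α² - X_0²)·√((X+1)² - 1 + X_0²/α²)), defined for α with X_0 < α < X_0/√(1-(1+X)²) (so that (X+1)² - 1 + X_0²/α² > 0). Then R_1'(α) < 0 on this interval. -/
open Real

set_option maxHeartbeats 1600000 in
theorem R1_deriv_neg (X₀ X α : ℝ) (hX₀ : 0 < X₀) (hX1 : -1 < X) (hX0 : X < 0)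
    (hα1 : X₀ < α) (hα2 : α < X₀ / Real.sqrt (1 - (1 + X) ^ 2)) :
    -1 + X₀ / (α ^ 2 - X₀ ^ 2) -
      X₀ ^ 2 * (X + 1) /
        (α * (α ^ 2 - X₀ ^ 2) * Real.sqrt ((X + 1) ^ 2 - 1 + X₀ ^ 2 / α ^ 2)) < 0 := by
  have hb : 0 < X + 1 := by linarith
  have hb1 : X + 1 < 1 := by linarith
  have hα0 : 0 < α := lt_trans hX₀ hα1
  have hc2 : 0 < 1 - (1 + X) ^ 2 := by nlinarith
  have hsq : 0 < Real.sqrt (1 - (1 + X) ^ 2) := Real.sqrt_pos.2 hc2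
  have h1 : α * Real.sqrt (1 - (1 + X) ^ 2) < X₀ := (lt_div_iff₀ hsq).1 hα2
  have hsqsq : Real.sqrt (1 - (1 + X) ^ 2) ^ 2 = 1 - (1 + X) ^ 2 := Real.sq_sqrt hc2.le
  have h2 : α ^ 2 * (1 - (1 + X) ^ 2) < X₀ ^ 2 := by
    nlinarith [mul_pos hα0 hsq]
  have hα2ne : (α : ℝ) ^ 2 ≠ 0 := by positivity
  have harg : 0 < (X + 1) ^ 2 - 1 + X₀ ^ 2 / α ^ 2 := by
    rw [show (X + 1) ^ 2 - 1 + X₀ ^ 2 / α ^ 2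
        = (X₀ ^ 2 - (1 - (1 + X) ^ 2) * α ^ 2) / α ^ 2 by field_simp; ring]
    exact div_pos (by nlinarith) (by positivity)
  set s := Real.sqrt ((X + 1) ^ 2 - 1 + X₀ ^ 2 / α ^ 2) with hsdef
  have hs : 0 < s := Real.sqrt_pos.2 harg
  have hs2 : s ^ 2 = (X + 1) ^ 2 - 1 + X₀ ^ 2 / α ^ 2 := Real.sq_sqrt harg.le
  have hss : α ^ 2 * s ^ 2 = X₀ ^ 2 - (1 - (X + 1) ^ 2) * α ^ 2 := by
    rw [hs2]; field_simp; ring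
  have hD : 0 < α ^ 2 - X₀ ^ 2 := by nlinarith
  have key : α * s * (X₀ + X₀ ^ 2 - α ^ 2) < X₀ ^ 2 * (X + 1) := by
    rcases le_or_gt (X₀ + X₀ ^ 2 - α ^ 2) 0 with h | h
    · have h3 : α * s * (X₀ + X₀ ^ 2 - α ^ 2) ≤ 0 :=
        mul_nonpos_of_nonneg_of_nonpos (mul_pos hα0 hs).le h
      nlinarith [mul_pos (mul_pos hX₀ hX₀) hb]
    · have hu1 : X₀ ^ 2 < α ^ 2 := by linarith
      have hu2 : α ^ 2 < X₀ + X₀ ^ 2 := by linarith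
      have hc2' : 0 < 1 - (X + 1) ^ 2 := by nlinarith
      have hf2 : 0 < X₀ ^ 2 - (1 - (X + 1) ^ 2) * (α ^ 2 - X₀) := by
        rcases le_or_gt (α ^ 2 - X₀) 0 with h' | h'
        · have h3 := mul_nonpos_of_nonneg_of_nonpos hc2'.le h'
          have h4 : 0 < X₀ ^ 2 := by positivity
          nlinarith
        · have h3 : (1 - (X + 1) ^ 2) * (α ^ 2 - X₀) < 1 * (α ^ 2 - X₀) := by
            apply mul_lt_mul_of_pos_right _ h'
            nlinarith
          have h4 : 0 < X₀ ^ 2 := by positivity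
          nlinarith
      have hq : 0 < (1 - (X + 1) ^ 2) * (α ^ 2) ^ 2
          - ((1 - (X + 1) ^ 2) * (X₀ ^ 2 + 2 * X₀) + X₀ ^ 2) * α ^ 2
          + (X₀ ^ 3 * (2 + X₀) + (1 - (X + 1) ^ 2) * X₀ ^ 2) := by
        have hid : (1 - (X + 1) ^ 2) * (α ^ 2) ^ 2
            - ((1 - (X + 1) ^ 2) * (X₀ ^ 2 + 2 * X₀) + X₀ ^ 2) * α ^ 2
            + (X₀ ^ 3 * (2 + X₀) + (1 - (X + 1) ^ 2) * X₀ ^ 2)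
            = X₀ ^ 3 * (X + 1) ^ 2 + (X₀ + X₀ ^ 2 - α ^ 2)
              * (X₀ ^ 2 - (1 - (X + 1) ^ 2) * (α ^ 2 - X₀)) := by ring
        rw [hid]
        have := mul_pos h hf2
        nlinarith [mul_pos (mul_pos (mul_pos hX₀ hX₀) hX₀) (mul_pos hb hb)]
      have hg : 0 < X₀ ^ 4 * (X + 1) ^ 2
          - (X₀ + X₀ ^ 2 - α ^ 2) ^ 2 * (X₀ ^ 2 - (1 - (X + 1) ^ 2) * α ^ 2) := by
        have hfac : X₀ ^ 4 * (X + 1) ^ 2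
            - (X₀ + X₀ ^ 2 - α ^ 2) ^ 2 * (X₀ ^ 2 - (1 - (X + 1) ^ 2) * α ^ 2)
            = (α ^ 2 - X₀ ^ 2) * ((1 - (X + 1) ^ 2) * (α ^ 2) ^ 2
              - ((1 - (X + 1) ^ 2) * (X₀ ^ 2 + 2 * X₀) + X₀ ^ 2) * α ^ 2
              + (X₀ ^ 3 * (2 + X₀) + (1 - (X + 1) ^ 2) * X₀ ^ 2)) := by ring
        rw [hfac]; exact mul_pos hD hq
      nlinarith [hg, hss, mul_pos (mul_pos hα0 hs) h,
        mul_pos (mul_pos hX₀ hX₀) hb,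
        sq_nonneg (α * s * (X₀ + X₀ ^ 2 - α ^ 2) - X₀ ^ 2 * (X + 1)),
        sq_nonneg (α * s * (X₀ + X₀ ^ 2 - α ^ 2) + X₀ ^ 2 * (X + 1))]
  have hsne : s ≠ 0 := ne_of_gt hs
  have hαne : α ≠ 0 := ne_of_gt hα0
  have hDne : α ^ 2 - X₀ ^ 2 ≠ 0 := ne_of_gt hD
  have heq : -1 + X₀ / (α ^ 2 - X₀ ^ 2) - X₀ ^ 2 * (X + 1) / (α * (α ^ 2 - X₀ ^ 2) * s)
      = (α * s * (X₀ + X₀ ^ 2 - α ^ 2) - X₀ ^ 2 * (X + 1)) / (α * (α ^ 2 - X₀ ^ 2) * s) := by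
    field_simp
    ring
  rw [heq]
  exact div_neg_of_neg_of_pos (by linarith) (by positivity)
end

section
/- Fix X_0 > 0 and X with -1 < X < 0 and X_0/α² terms well-defined. The quartic equation [(X+1)²-1]·α⁴ - [(2X_0+X_0²)(X+1)² - 2X_0 - 2X_0²]·α² + X_0²·(X+X_0+2)(X-X_0) = 0, viewed as a quadratic in α², has solutions α²_± = (X_0/(2|X|(X+2)))·[(X_0+2)|X|(X+2) + X_0 ± √X_0·(X+1)·√((X_0+4)(X+1)² - 4)], and these are real if and only if (X_0+4)(X+1)² - 4 ≥ 0, i.e., X ≥ -1 + 2/√(X_0+4). -/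
open Real

theorem caustic_quartic_roots (X₀ X : ℝ) (hX₀ : 0 < X₀) (hX1 : -1 < X) (hX0 : X < 0) :
    ((X₀ + 4) * (X + 1) ^ 2 - 4 ≥ 0 ↔ X ≥ -1 + 2 / Real.sqrt (X₀ + 4)) ∧
    ((X₀ + 4) * (X + 1) ^ 2 - 4 ≥ 0 →
      ∀ s : ℝ,
        (s = X₀ / (2 * |X| * (X + 2)) *
            ((X₀ + 2) * |X| * (X + 2) + X₀ +
              Real.sqrt X₀ * (X + 1) * Real.sqrt ((X₀ + 4) * (X + 1) ^ 2 - 4)) ∨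
         s = X₀ / (2 * |X| * (X + 2)) *
            ((X₀ + 2) * |X| * (X + 2) + X₀ -
              Real.sqrt X₀ * (X + 1) * Real.sqrt ((X₀ + 4) * (X + 1) ^ 2 - 4))) →
        ((X + 1) ^ 2 - 1) * s ^ 2 -
            ((2 * X₀ + X₀ ^ 2) * (X + 1) ^ 2 - 2 * X₀ - 2 * X₀ ^ 2) * s +
            X₀ ^ 2 * (X + X₀ + 2) * (X - X₀) = 0) := by
  have hX1' : 0 < X + 1 := by linarith
  have ht0 : (0:ℝ) < X₀ + 4 := by linarith
  have ht : 0 < Real.sqrt (X₀ + 4) := Real.sqrt_pos.mpr ht0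
  have ht2 : Real.sqrt (X₀ + 4) ^ 2 = X₀ + 4 := Real.sq_sqrt ht0.le
  constructor
  · set t := Real.sqrt (X₀ + 4)
    constructor
    · intro h
      have hk : 2 ≤ (X + 1) * t := by
        nlinarith [mul_pos ht hX1', sq_nonneg ((X + 1) * t - 2)]
      have h2 : 2 / t ≤ X + 1 := (div_le_iff₀ ht).mpr (by linarith)
      linarith
    · intro h
      have h2 : 2 / t ≤ X + 1 := by linarith
      have hk : 2 ≤ (X + 1) * t := by rwa [div_le_iff₀ ht] at h2
      nlinarith [mul_pos ht hX1']
  · intro hD s hs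
    have habs : |X| = -X := abs_of_neg hX0
    have hu : 0 < -X * (X + 2) := by nlinarith
    have hr2 : (Real.sqrt X₀ * (X + 1) * Real.sqrt ((X₀ + 4) * (X + 1) ^ 2 - 4)) ^ 2
        = X₀ * (X + 1) ^ 2 * ((X₀ + 4) * (X + 1) ^ 2 - 4) := by
      rw [mul_pow, mul_pow, Real.sq_sqrt hX₀.le, Real.sq_sqrt hD]
    set r := Real.sqrt X₀ * (X + 1) * Real.sqrt ((X₀ + 4) * (X + 1) ^ 2 - 4) with hrdef
    rw [habs] at hs
    have hXne : X ≠ 0 := ne_of_lt hX0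
    have hX2 : X + 2 ≠ 0 := by intro h; linarith
    have hA : Real.sqrt X₀ ^ 2 = X₀ := Real.sq_sqrt hX₀.le
    have hB : Real.sqrt ((X₀ + 4) * (X + 1) ^ 2 - 4) ^ 2 = (X₀ + 4) * (X + 1) ^ 2 - 4 :=
      Real.sq_sqrt hD
    rcases hs with hs | hs <;> rw [hs] <;> field_simp <;>
      linear_combination (X * (X + 2) * X₀ ^ 2) * hr2
end

section
/- For X_0 > 0 and -1 < X < 0, define f̃''(z) = 2X_0/(1-4z)^{3/2} - 1/(2z√(1-4z)) - (1+X)/(2z√((1+X)²-4z)) for 0 < z < (1+X)²/4. At X = X_cusp = -1 + 2/√(X_0+4), the point z = 3/(4(X_0+3)) lies in (0, (1+X_cusp)²/4) and satisfies f̃''(3/(4(X_0+3))) = 0. -/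
open Real Set

theorem ftilde_second_deriv_vanishes_at_cusp (X₀ : ℝ) (hX₀ : 0 < X₀) :
    (3 / (4 * (X₀ + 3)) : ℝ) ∈
      Set.Ioo (0 : ℝ) ((1 + (-1 + 2 / Real.sqrt (X₀ + 4))) ^ 2 / 4) ∧
    (fun z : ℝ =>
        2 * X₀ / (Real.sqrt (1 - 4 * z)) ^ 3 -
          1 / (2 * z * Real.sqrt (1 - 4 * z)) -
          (1 + (-1 + 2 / Real.sqrt (X₀ + 4))) /
            (2 * z * Real.sqrt ((1 + (-1 + 2 / Real.sqrt (X₀ + 4))) ^ 2 - 4 * z)))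
      (3 / (4 * (X₀ + 3))) = 0 := by
  have h3 : (0:ℝ) < X₀ + 3 := by linarith
  have h4 : (0:ℝ) < X₀ + 4 := by linarith
  set a := Real.sqrt X₀ with ha
  set b := Real.sqrt (X₀ + 3) with hb
  set c := Real.sqrt (X₀ + 4) with hc
  have ha2 : a ^ 2 = X₀ := Real.sq_sqrt hX₀.le
  have hb2 : b ^ 2 = X₀ + 3 := Real.sq_sqrt h3.le
  have hc2 : c ^ 2 = X₀ + 4 := Real.sq_sqrt h4.le
  have hap : 0 < a := Real.sqrt_pos.mpr hX₀
  have hbp : 0 < b := Real.sqrt_pos.mpr h3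
  have hcp : 0 < c := Real.sqrt_pos.mpr h4
  have hX : 1 + (-1 + 2 / c) = 2 / c := by ring
  have hXsq : (1 + (-1 + 2 / c)) ^ 2 = 4 / (X₀ + 4) := by
    rw [hX, div_pow, ← hc2]; norm_num
  have harg1 : 1 - 4 * (3 / (4 * (X₀ + 3))) = X₀ / (X₀ + 3) := by
    field_simp; ring
  have hs1 : Real.sqrt (1 - 4 * (3 / (4 * (X₀ + 3)))) = a / b := by
    rw [harg1, Real.sqrt_div hX₀.le]
  have harg2 : (1 + (-1 + 2 / c)) ^ 2 - 4 * (3 / (4 * (X₀ + 3)))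
      = X₀ / ((X₀ + 4) * (X₀ + 3)) := by
    rw [hXsq]; field_simp; ring
  have hs2 : Real.sqrt ((1 + (-1 + 2 / c)) ^ 2 - 4 * (3 / (4 * (X₀ + 3)))) = a / (c * b) := by
    rw [harg2, Real.sqrt_div hX₀.le, Real.sqrt_mul h4.le]
  constructor
  · constructor
    · positivity
    · rw [hXsq]
      have h44 : 4 / (X₀ + 4) / 4 = 1 / (X₀ + 4) := by ring
      rw [h44, div_lt_div_iff₀ (by positivity) h4]
      nlinarith
  · simp only
    rw [hs1, hs2, hX, ← ha2]
    have : a ^ 2 + 3 = b ^ 2 := by rw [ha2, hb2]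
    field_simp
    rw [this]
    ring
end

section
/- For a = X + X_0 > 0, define f'(z) = -t + a/√(1-4z) + 2·log((1 + √(1-4z))/(2√z)) for 0 < z < 1/4. Then f''(z) = 2a/(1-4z)^{3/2} - 1/(z√(1-4z)), f''(z) = 0 has the unique solution z̃ = 1/(2a+4) in (0,1/4), and min_{0<z<1/4} f'(z) = -t + √(a(a+2)) + 2·log((√(a+2) + √a)/√2). -/
open Real Set


lemma phase_hasDeriv (a t : ℝ) (z : ℝ) (hz : z ∈ Set.Ioo (0:ℝ) (1/4)) :
    HasDerivAt
        (fun z : ℝ =>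
          -t + a / Real.sqrt (1 - 4 * z) +
            2 * Real.log ((1 + Real.sqrt (1 - 4 * z)) / (2 * Real.sqrt z)))
        (2 * a / (Real.sqrt (1 - 4 * z)) ^ 3 - 1 / (z * Real.sqrt (1 - 4 * z))) z := by
  obtain ⟨hz0, hz4⟩ := hz
  have h1 : (0:ℝ) < 1 - 4 * z := by linarith
  set s := Real.sqrt (1 - 4 * z) with hs_def
  have hs : 0 < s := Real.sqrt_pos.mpr h1
  have hs2 : s ^ 2 = 1 - 4 * z := Real.sq_sqrt h1.le
  have hu : HasDerivAt (fun z : ℝ => 1 - 4 * z) (-4) z := by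
    simpa using ((hasDerivAt_id z).const_mul (4:ℝ)).const_sub 1
  have hsd : HasDerivAt (fun z : ℝ => Real.sqrt (1 - 4 * z)) (-2 / s) z := by
    have := hu.sqrt h1.ne'
    convert this using 1
    rw [← hs_def]; field_simp; ring
  -- g function
  have hg : HasDerivAt
      (fun w : ℝ => -t + a / Real.sqrt (1 - 4 * w) +
        (2 * Real.log (1 + Real.sqrt (1 - 4 * w)) - 2 * Real.log 2 - Real.log w))
      (2 * a / s ^ 3 - 1 / (z * s)) z := by
    have hdiv : HasDerivAt (fun w : ℝ => a / Real.sqrt (1 - 4 * w))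
        ((0 * s - a * (-2 / s)) / s ^ 2) z := (hasDerivAt_const z a).div hsd hs.ne'
    have hlog1 : HasDerivAt (fun w : ℝ => Real.log (1 + Real.sqrt (1 - 4 * w)))
        ((0 + -2 / s) / (1 + s)) z :=
      (((hasDerivAt_const z (1:ℝ)).add hsd)).log (by show (1:ℝ) + Real.sqrt (1 - 4 * z) ≠ 0; positivity)
    have hlogz : HasDerivAt Real.log z⁻¹ z := Real.hasDerivAt_log hz0.ne'
    have := (((hasDerivAt_const z (-t)).add hdiv).add
      (((hlog1.const_mul 2).sub (hasDerivAt_const z (2 * Real.log 2))).sub hlogz))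
    refine this.congr_deriv ?_
    have e1 : (0 * s - a * (-2 / s)) / s ^ 2 = 2 * a / s ^ 3 := by
      field_simp; ring
    have e2 : 2 * ((0 + -2 / s) / (1 + s)) - 0 - z⁻¹ = -(1 / (z * s)) := by
      have h1s : (0:ℝ) < 1 + s := by linarith
      field_simp
      ring_nf
      linear_combination (-1 : ℝ) * hs2
    rw [e1, e2]; ring
  apply hg.congr_of_eventuallyEq
  filter_upwards [isOpen_Ioo.mem_nhds (show z ∈ Set.Ioo (0:ℝ) (1/4) from ⟨hz0, hz4⟩)] with w hw
  obtain ⟨hw0, hw4⟩ := hw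
  have hw1 : (0:ℝ) < 1 - 4 * w := by linarith
  have hsw : 0 < Real.sqrt (1 - 4 * w) := Real.sqrt_pos.mpr hw1
  have hswz : 0 < Real.sqrt w := Real.sqrt_pos.mpr hw0
  rw [Real.log_div (by positivity) (by positivity), Real.log_mul (by norm_num) hswz.ne',
    Real.log_sqrt hw0.le]
  ring

lemma second_deriv_eq (a z : ℝ) (hz0 : 0 < z) (hz4 : z < 1/4) :
    2 * a / (Real.sqrt (1 - 4 * z)) ^ 3 - 1 / (z * Real.sqrt (1 - 4 * z)) =
      ((2 * a + 4) * z - 1) / (z * (Real.sqrt (1 - 4 * z)) ^ 3) := by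
  have h1 : (0:ℝ) < 1 - 4 * z := by linarith
  set s := Real.sqrt (1 - 4 * z) with hs_def
  have hs : 0 < s := Real.sqrt_pos.mpr h1
  have hs2 : s ^ 2 = 1 - 4 * z := Real.sq_sqrt h1.le
  field_simp
  linear_combination (-1 : ℝ) * hs2

lemma phase_value (a : ℝ) (ha : 0 < a) :
    a / Real.sqrt (1 - 4 * (1 / (2 * a + 4))) = Real.sqrt (a * (a + 2)) ∧
    (1 + Real.sqrt (1 - 4 * (1 / (2 * a + 4)))) / (2 * Real.sqrt (1 / (2 * a + 4)))
      = (Real.sqrt (a + 2) + Real.sqrt a) / Real.sqrt 2 := by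
  have ha2 : (0:ℝ) < a + 2 := by linarith
  have hd : (0:ℝ) < 2 * a + 4 := by linarith
  have h1 : 1 - 4 * (1 / (2 * a + 4)) = a / (a + 2) := by
    field_simp; ring
  have hq : 0 < Real.sqrt (a + 2) := Real.sqrt_pos.mpr ha2
  have hp : 0 < Real.sqrt a := Real.sqrt_pos.mpr ha
  have hr : 0 < Real.sqrt 2 := by positivity
  have hr2 : Real.sqrt 2 ^ 2 = 2 := Real.sq_sqrt (by norm_num)
  have hp2 : Real.sqrt a ^ 2 = a := Real.sq_sqrt ha.le
  have hq2 : Real.sqrt (a + 2) ^ 2 = a + 2 := Real.sq_sqrt ha2.le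
  have hsz : Real.sqrt (1 - 4 * (1 / (2 * a + 4))) = Real.sqrt a / Real.sqrt (a + 2) := by
    rw [h1, Real.sqrt_div ha.le]
  have hzt : Real.sqrt (1 / (2 * a + 4)) = 1 / (Real.sqrt 2 * Real.sqrt (a + 2)) := by
    rw [show (2 * a + 4 : ℝ) = 2 * (a + 2) by ring] at *
    rw [Real.sqrt_div (by norm_num) _, Real.sqrt_one, Real.sqrt_mul (by norm_num : (0:ℝ) ≤ 2)]
  constructor
  · rw [hsz, Real.sqrt_mul ha.le]
    field_simp
    nlinarith [hp2]
  · rw [hsz, hzt]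
    field_simp
    nlinarith [hr2, mul_pos hp hq, mul_pos hr hq]

theorem phase_derivative_minimum (a t : ℝ) (ha : 0 < a) :
    (∀ z ∈ Set.Ioo (0 : ℝ) (1 / 4),
      HasDerivAt
        (fun z : ℝ =>
          -t + a / Real.sqrt (1 - 4 * z) +
            2 * Real.log ((1 + Real.sqrt (1 - 4 * z)) / (2 * Real.sqrt z)))
        (2 * a / (Real.sqrt (1 - 4 * z)) ^ 3 - 1 / (z * Real.sqrt (1 - 4 * z))) z) ∧
    (1 / (2 * a + 4) : ℝ) ∈ Set.Ioo (0 : ℝ) (1 / 4) ∧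
    (2 * a / (Real.sqrt (1 - 4 * (1 / (2 * a + 4)))) ^ 3 -
        1 / ((1 / (2 * a + 4)) * Real.sqrt (1 - 4 * (1 / (2 * a + 4)))) = 0) ∧
    (∀ z ∈ Set.Ioo (0 : ℝ) (1 / 4),
      2 * a / (Real.sqrt (1 - 4 * z)) ^ 3 - 1 / (z * Real.sqrt (1 - 4 * z)) = 0 →
        z = 1 / (2 * a + 4)) ∧
    (∀ z ∈ Set.Ioo (0 : ℝ) (1 / 4),
      -t + a / Real.sqrt (1 - 4 * (1 / (2 * a + 4))) +
          2 * Real.log ((1 + Real.sqrt (1 - 4 * (1 / (2 * a + 4)))) /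
            (2 * Real.sqrt (1 / (2 * a + 4)))) ≤
        -t + a / Real.sqrt (1 - 4 * z) +
          2 * Real.log ((1 + Real.sqrt (1 - 4 * z)) / (2 * Real.sqrt z))) ∧
    (-t + a / Real.sqrt (1 - 4 * (1 / (2 * a + 4))) +
        2 * Real.log ((1 + Real.sqrt (1 - 4 * (1 / (2 * a + 4)))) /
          (2 * Real.sqrt (1 / (2 * a + 4)))) =
      -t + Real.sqrt (a * (a + 2)) +
        2 * Real.log ((Real.sqrt (a + 2) + Real.sqrt a) / Real.sqrt 2)) := by
  have hd : (0:ℝ) < 2 * a + 4 := by linarith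
  have hcrit : (1 / (2 * a + 4) : ℝ) ∈ Set.Ioo (0 : ℝ) (1 / 4) := by
    constructor
    · positivity
    · rw [div_lt_div_iff₀ hd (by norm_num)]; linarith
  set c : ℝ := 1 / (2 * a + 4) with hc_def
  set F : ℝ → ℝ := fun z : ℝ =>
      -t + a / Real.sqrt (1 - 4 * z) +
        2 * Real.log ((1 + Real.sqrt (1 - 4 * z)) / (2 * Real.sqrt z)) with hF_def
  have hderiv : ∀ z ∈ Set.Ioo (0 : ℝ) (1 / 4), HasDerivAt F
      (2 * a / (Real.sqrt (1 - 4 * z)) ^ 3 - 1 / (z * Real.sqrt (1 - 4 * z))) z :=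
    fun z hz => phase_hasDeriv a t z hz
  have hcd : (2 * a + 4) * c = 1 := by rw [hc_def]; field_simp
  have hsign : ∀ z ∈ Set.Ioo (0 : ℝ) (1 / 4),
      2 * a / (Real.sqrt (1 - 4 * z)) ^ 3 - 1 / (z * Real.sqrt (1 - 4 * z)) =
        ((2 * a + 4) * z - 1) / (z * (Real.sqrt (1 - 4 * z)) ^ 3) :=
    fun z hz => second_deriv_eq a z hz.1 hz.2
  refine ⟨hderiv, hcrit, ?_, ?_, ?_, ?_⟩
  · rw [hsign c hcrit]
    rw [hcd]
    simp
  · intro z hz h0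
    rw [hsign z hz] at h0
    have h1 : (0:ℝ) < 1 - 4 * z := by have := hz.2; linarith
    have hs : 0 < Real.sqrt (1 - 4 * z) := Real.sqrt_pos.mpr h1
    have hz0 : 0 < z := hz.1
    have hden : 0 < z * (Real.sqrt (1 - 4 * z)) ^ 3 := by positivity
    have hnum : (2 * a + 4) * z - 1 = 0 := by
      by_contra h
      exact h (by field_simp at h0; linarith [h0])
    rw [hc_def]
    field_simp
    linarith
  · intro z hz
    rcases lt_trichotomy z c with hlt | heq | hgt
    · -- z < c : F anti on [z, c]
      have hsub : Set.Icc z c ⊆ Set.Ioo (0:ℝ) (1/4) := fun x hx =>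
        ⟨lt_of_lt_of_le hz.1 hx.1, lt_of_le_of_lt hx.2 hcrit.2⟩
      have hanti : StrictAntiOn F (Set.Icc z c) := by
        apply strictAntiOn_of_deriv_neg (convex_Icc z c)
        · exact fun x hx => ((hderiv x (hsub hx)).continuousAt).continuousWithinAt
        · intro x hx
          rw [interior_Icc] at hx
          have hxm : x ∈ Set.Ioo (0:ℝ) (1/4) := hsub ⟨hx.1.le, hx.2.le⟩
          rw [(hderiv x hxm).deriv, hsign x hxm]
          have h1 : (0:ℝ) < 1 - 4 * x := by have := hxm.2; linarith
          have hs : 0 < Real.sqrt (1 - 4 * x) := Real.sqrt_pos.mpr h1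
          have hx0 : 0 < x := hxm.1
          apply div_neg_of_neg_of_pos
          · nlinarith [hx.2, hcd, hxm.1]
          · positivity
      exact (hanti (Set.left_mem_Icc.mpr hlt.le) (Set.right_mem_Icc.mpr hlt.le) hlt).le
    · rw [heq]
    · -- c < z : F mono on [c, z]
      have hsub : Set.Icc c z ⊆ Set.Ioo (0:ℝ) (1/4) := fun x hx =>
        ⟨lt_of_lt_of_le hcrit.1 hx.1, lt_of_le_of_lt hx.2 hz.2⟩
      have hmono : StrictMonoOn F (Set.Icc c z) := by
        apply strictMonoOn_of_deriv_pos (convex_Icc c z)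
        · exact fun x hx => ((hderiv x (hsub hx)).continuousAt).continuousWithinAt
        · intro x hx
          rw [interior_Icc] at hx
          have hxm : x ∈ Set.Ioo (0:ℝ) (1/4) := hsub ⟨hx.1.le, hx.2.le⟩
          rw [(hderiv x hxm).deriv, hsign x hxm]
          have h1 : (0:ℝ) < 1 - 4 * x := by have := hxm.2; linarith
          have hs : 0 < Real.sqrt (1 - 4 * x) := Real.sqrt_pos.mpr h1
          have hx0 : 0 < x := hxm.1
          apply div_pos
          · nlinarith [hx.1, hcd, hcrit.1]
          · positivity
      exact (hmono (Set.left_mem_Icc.mpr hgt.le) (Set.right_mem_Icc.mpr hgt.le) hgt).le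
  · obtain ⟨hv1, hv2⟩ := phase_value a ha
    rw [hv1, hv2]
end

section
/- For X_0 > 0, the caustic relation t - α = (1/2)·log((α² + α·X_0 - X_0)/(α² - α·X_0 - X_0)) combined with differentiating X(t;α) = (1/2 + X_0/(2α))e^{α-t} + (1/2 - X_0/(2α))e^{t-α} - 1 with respect to α gives: ∂X/∂α = 0 if and only if e^{2(t-α)} = (α² + α·X_0 - X_0)/(α² - α·X_0 - X_0), for α > (X_0 + √(X_0² + 4X_0))/2 (so both numerator and denominator are positive). -/
open Real

theorem caustic_relation (X₀ t α : ℝ) (hX₀ : 0 < X₀)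
    (hα : (X₀ + Real.sqrt (X₀ ^ 2 + 4 * X₀)) / 2 < α) :
    HasDerivAt
      (fun a : ℝ =>
        (1 / 2 + X₀ / (2 * a)) * Real.exp (a - t) +
          (1 / 2 - X₀ / (2 * a)) * Real.exp (t - a) - 1)
      ((Real.exp (α - t) * (α ^ 2 + α * X₀ - X₀) -
          Real.exp (t - α) * (α ^ 2 - α * X₀ - X₀)) / (2 * α ^ 2)) α ∧
    ((Real.exp (α - t) * (α ^ 2 + α * X₀ - X₀) -
        Real.exp (t - α) * (α ^ 2 - α * X₀ - X₀)) / (2 * α ^ 2) = 0 ↔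
      Real.exp (2 * (t - α)) = (α ^ 2 + α * X₀ - X₀) / (α ^ 2 - α * X₀ - X₀)) := by
  have hs : Real.sqrt (X₀ ^ 2 + 4 * X₀) ≥ 0 := Real.sqrt_nonneg _
  have hs2 : Real.sqrt (X₀ ^ 2 + 4 * X₀) ^ 2 = X₀ ^ 2 + 4 * X₀ := by
    rw [Real.sq_sqrt]; nlinarith
  have hαpos : 0 < α := by nlinarith
  have hB : 0 < α ^ 2 - α * X₀ - X₀ := by nlinarith
  have hA : 0 < α ^ 2 + α * X₀ - X₀ := by nlinarith
  constructor
  · have hu : HasDerivAt (fun a : ℝ => X₀ / (2 * a)) (X₀ * (-2 / (2 * α) ^ 2)) α := by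
      have h1 : HasDerivAt (fun a : ℝ => 2 * a) 2 α := by simpa using (hasDerivAt_id α).const_mul 2
      have h2 := h1.inv (by positivity)
      simpa [div_eq_mul_inv] using h2.const_mul X₀
    have hg : HasDerivAt (fun a : ℝ => Real.exp (a - t)) (Real.exp (α - t)) α := by
      simpa using ((hasDerivAt_id α).sub_const t).exp
    have hh : HasDerivAt (fun a : ℝ => Real.exp (t - a)) (-Real.exp (t - α)) α := by
      simpa using ((hasDerivAt_id α).const_sub t).exp
    have := (((hu.const_add (1 / 2)).mul hg).add
      ((hu.const_sub (1 / 2)).mul hh)).sub_const 1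
    refine this.congr_deriv ?_
    field_simp
    ring
  · have hne : (2 * α ^ 2) ≠ 0 := by positivity
    rw [div_eq_zero_iff]
    have he : Real.exp (2 * (t - α)) = Real.exp (t - α) / Real.exp (α - t) := by
      rw [← Real.exp_sub]; ring_nf
    constructor
    · rintro (h | h)
      · rw [he, eq_div_iff hB.ne', div_mul_eq_mul_div, div_eq_iff (Real.exp_pos _).ne']
        linarith
      · exact absurd h hne
    · intro h
      left
      rw [he, eq_div_iff hB.ne', div_mul_eq_mul_div, div_eq_iff (Real.exp_pos _).ne'] at h
      linarith
end
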